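/- With J the maximal block Jacobi operator as above, if z ∈ ℂ is in the resolvent set of J (J − zI is bijective from Dom(J) onto ℓ²), then dim GEV_{ℓ²}(z) = d exactly. -/

import Mathlib

open Matrix

/-- The formal block Jacobi operator: `(𝒥u)₀ = B₀u₀ + A₀u₁`,
`(𝒥u)_n = A_{n−1}* u_{n−1} + B_n u_n + A_n u_{n+1}` for `n ≥ 1`. -/
noncomputable def jacobiAct {d : ℕ} (A B : ℕ → Matrix (Fin d) (Fin d) ℂ)
    (u : ℕ → Fin d → ℂ) : ℕ → Fin d → ℂ
  | 0 => (B 0).mulVec (u 0) + (A 0).mulVec (u 1)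
  | n + 1 => (A n)ᴴ.mulVec (u n) + (B (n + 1)).mulVec (u (n + 1))
      + (A (n + 1)).mulVec (u (n + 2))

/-- Square-summability of a `ℂ^d`-valued sequence (with the Euclidean norm on `ℂ^d`). -/
def IsL2 {d : ℕ} (u : ℕ → Fin d → ℂ) : Prop :=
  Memℓp (fun n => (WithLp.equiv 2 (Fin d → ℂ)).symm (u n)) 2

/-- The space `GEV_{ℓ²}(z)` of square-summable generalized eigenvectors. -/
noncomputable def GEVl2 (d : ℕ) (A B : ℕ → Matrix (Fin d) (Fin d) ℂ) (z : ℂ) :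
    Submodule ℂ (ℕ → (Fin d → ℂ)) where
  carrier := {u | (∀ n : ℕ, 1 ≤ n → jacobiAct A B u n = z • u n) ∧ IsL2 u}
  add_mem' := by
    rintro u v ⟨hu1, hu2⟩ ⟨hv1, hv2⟩
    refine ⟨fun n hn => ?_, by
      have h := hu2.add hv2
      unfold IsL2 at *
      convert h using 1
      funext n
      simp [WithLp.equiv_symm_apply]⟩
    cases n with
    | zero => omega
    | succ m =>
      have hu := hu1 (m + 1) (by omega)
      have hv := hv1 (m + 1) (by omega)
      simp only [jacobiAct, Pi.add_apply, Matrix.mulVec_add, smul_add] at hu hv ⊢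
      rw [← hu, ← hv]; abel
  zero_mem' := by
    refine ⟨fun n hn => ?_, zero_memℓp⟩
    cases n with
    | zero => omega
    | succ m => simp [jacobiAct]
  smul_mem' := by
    rintro c u ⟨hu1, hu2⟩
    refine ⟨fun n hn => ?_, hu2.const_smul c⟩
    cases n with
    | zero => omega
    | succ m =>
      have hu := hu1 (m + 1) (by omega)
      simp only [jacobiAct, Pi.smul_apply, Matrix.mulVec_smul] at hu ⊢
      rw [smul_comm z c, ← hu]
      simp [smul_add]


lemma jacobiAct_add {d : ℕ} (A B : ℕ → Matrix (Fin d) (Fin d) ℂ) (u v : ℕ → Fin d → ℂ) :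
    jacobiAct A B (u + v) = jacobiAct A B u + jacobiAct A B v := by
  funext n i
  cases n with
  | zero => simp [jacobiAct, Matrix.mulVec_add]; ring
  | succ m => simp [jacobiAct, Matrix.mulVec_add]; ring

lemma jacobiAct_smul {d : ℕ} (A B : ℕ → Matrix (Fin d) (Fin d) ℂ) (c : ℂ) (u : ℕ → Fin d → ℂ) :
    jacobiAct A B (c • u) = c • jacobiAct A B u := by
  funext n i
  cases n with
  | zero => simp [jacobiAct, Matrix.mulVec_smul]; ring
  | succ m => simp [jacobiAct, Matrix.mulVec_smul]; ring

lemma jacobiAct_zero {d : ℕ} (A B : ℕ → Matrix (Fin d) (Fin d) ℂ) :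
    jacobiAct A B 0 = 0 := by
  funext n i
  cases n with
  | zero => simp [jacobiAct]
  | succ m => simp [jacobiAct]

lemma isL2_delta {d : ℕ} (w : Fin d → ℂ) :
    IsL2 (fun n => if n = 0 then w else 0) := by
  apply memℓp_gen
  apply summable_of_ne_finset_zero (s := {0})
  intro n hn
  simp only [Finset.mem_singleton] at hn
  simp [hn]

/-- If `z` belongs to the resolvent set of the maximal block Jacobi operator `J`
(i.e. `J − zI` is a bijection from `Dom(J) = {u ∈ ℓ² : 𝒥u ∈ ℓ²}` onto `ℓ²`), then the
space of square-summable generalized eigenvectors for `z` has dimension exactly `d`. -/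
theorem rank_gevl2_eq (d : ℕ) (A B : ℕ → Matrix (Fin d) (Fin d) ℂ)
    (hA : ∀ n, IsUnit (A n).det) (hB : ∀ n, (B n).IsHermitian) (z : ℂ)
    (hz : ∀ f : ℕ → Fin d → ℂ, IsL2 f →
      ∃! u : ℕ → Fin d → ℂ,
        (IsL2 u ∧ IsL2 (jacobiAct A B u)) ∧ jacobiAct A B u - z • u = f) :
    Module.rank ℂ (GEVl2 d A B z) = d := by
  classical
  set S : (GEVl2 d A B z) →ₗ[ℂ] (Fin d → ℂ) :=
    { toFun := fun u => jacobiAct A B (u : ℕ → Fin d → ℂ) 0 - z • (u : ℕ → Fin d → ℂ) 0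
      map_add' := by
        rintro u v
        simp only [Submodule.coe_add, jacobiAct_add, Pi.add_apply, Pi.smul_apply, smul_add]
        abel
      map_smul' := by
        rintro c u
        simp only [SetLike.val_smul, jacobiAct_smul, Pi.smul_apply, RingHom.id_apply,
          smul_sub, smul_comm z c] } with hS
  have hinj : Function.Injective S := by
    rw [injective_iff_map_eq_zero]
    rintro ⟨u, hu1, hu2⟩ h0
    have key : jacobiAct A B u = z • u := by
      funext n
      cases n with
      | zero =>
        have := sub_eq_zero.mp h0
        simpa using this
      | succ m => exact hu1 (m + 1) (by omega)
    obtain ⟨u₀, -, huniq⟩ := hz 0 zero_memℓp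
    have h1 : u = u₀ := by
      apply (huniq u ⟨⟨hu2, ?_⟩, ?_⟩)
      · rw [key]; exact hu2.const_smul z
      · rw [key]; simp
    have h2 : (0 : ℕ → Fin d → ℂ) = u₀ := by
      apply (huniq 0 ⟨⟨zero_memℓp, ?_⟩, ?_⟩)
      · rw [jacobiAct_zero]; exact zero_memℓp
      · rw [jacobiAct_zero]; simp
    ext n i
    have : u = 0 := h1.trans h2.symm
    simp [this]
  have hsurj : Function.Surjective S := by
    intro w
    obtain ⟨u, ⟨⟨hu1, hu2⟩, heq⟩, -⟩ := hz (fun n => if n = 0 then w else 0) (isL2_delta w)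
    have hmem : u ∈ GEVl2 d A B z := by
      refine ⟨fun n hn => ?_, hu1⟩
      obtain ⟨m, rfl⟩ : ∃ m, n = m + 1 := ⟨n - 1, by omega⟩
      have := congrFun heq (m + 1)
      simp only [Pi.sub_apply, Pi.smul_apply, if_neg (Nat.succ_ne_zero m)] at this
      exact sub_eq_zero.mp this
    refine ⟨⟨u, hmem⟩, ?_⟩
    have := congrFun heq 0
    simpa [hS] using this
  have e : (GEVl2 d A B z) ≃ₗ[ℂ] (Fin d → ℂ) := LinearEquiv.ofBijective S ⟨hinj, hsurj⟩
  rw [e.rank_eq]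
  simp
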